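/- arXiv:1707.07170 — 5 statements merged into one kernel-verified Lean document; each statement's English description precedes it below -/
import Mathlib

section
/- Let n ≥ 9 and let F be a finite simple graph such that F has no cycle whose length lies in {⌈(n−1)/2⌉, ..., n−1}, and every pair of vertices of F has at least one common neighbor. Then F has no cycle of length greater than ⌈(n−1)/2⌉ − 1. -/
namespace SimpleGraph
namespace Walk

variable {V : Type*} {G : SimpleGraph V}

/-- The walk consisting of the first `n` darts of `p`. -/
def myTake : {u v : V} → (p : G.Walk u v) → (n : ℕ) → G.Walk u (p.getVert n)
  | _, _, .nil, _ => .nil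
  | _, _, .cons _ _, 0 => .nil
  | _, _, .cons h q, (n+1) => .cons h (q.myTake n)

/-- The walk obtained from `p` by removing the first `n` darts. -/
def myDrop : {u v : V} → (p : G.Walk u v) → (n : ℕ) → G.Walk (p.getVert n) v
  | _, _, .nil, _ => .nil
  | _, _, .cons h q, 0 => .cons h q
  | _, _, .cons _ q, (n+1) => q.myDrop n

lemma length_myTake {u v : V} (p : G.Walk u v) (n : ℕ) (h : n ≤ p.length) :
    (p.myTake n).length = n := by
  induction p generalizing n with
  | nil => simp at h; simp [h, myTake]
  | cons h q ih =>
    cases n with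
    | zero => rfl
    | succ n => show (q.myTake n).length + 1 = n + 1; rw [ih]; simpa using h

lemma length_myDrop {u v : V} (p : G.Walk u v) (n : ℕ) :
    (p.myDrop n).length = p.length - n := by
  induction p generalizing n with
  | nil => simp [myDrop]
  | cons h q ih =>
    cases n with
    | zero => rfl
    | succ n => show (q.myDrop n).length = (Walk.cons h q).length - (n+1); rw [ih, length_cons]; omega

lemma getVert_myDrop {u v : V} (p : G.Walk u v) (n m : ℕ) :
    (p.myDrop n).getVert m = p.getVert (n + m) := by
  induction p generalizing n with
  | nil => simp [myDrop, getVert_of_length_le]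
  | cons h q ih =>
    cases n with
    | zero => show (Walk.cons h q).getVert m = (Walk.cons h q).getVert (0 + m); rw [Nat.zero_add]
    | succ n =>
      show (q.myDrop n).getVert m = (Walk.cons h q).getVert (n+1+m)
      rw [ih, show n+1+m = (n+m)+1 by omega, getVert_cons_succ]

lemma support_myTake {u v : V} (p : G.Walk u v) (n : ℕ) :
    (p.myTake n).support = p.support.take (n+1) := by
  induction p generalizing n with
  | nil => cases n <;> simp [myTake]
  | cons h q ih =>
    cases n with
    | zero => simp [myTake]; rfl
    | succ n => simp [myTake, ih]

lemma support_myDrop {u v : V} (p : G.Walk u v) (n : ℕ) (h : n ≤ p.length) :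
    (p.myDrop n).support = p.support.drop n := by
  induction p generalizing n with
  | nil => simp at h; simp [h, myDrop]
  | cons hadj q ih =>
    cases n with
    | zero => simp [myDrop]; rfl
    | succ n =>
      simp only [myDrop, support_cons, List.drop_succ_cons]
      exact ih n (by simpa using h)

lemma edges_myTake {u v : V} (p : G.Walk u v) (n : ℕ) :
    (p.myTake n).edges = p.edges.take n := by
  induction p generalizing n with
  | nil => cases n <;> simp [myTake]
  | cons h q ih =>
    cases n with
    | zero => simp [myTake]; rfl
    | succ n => simp [myTake, ih]

lemma edges_myDrop {u v : V} (p : G.Walk u v) (n : ℕ) :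
    (p.myDrop n).edges = p.edges.drop n := by
  induction p generalizing n with
  | nil => simp [myDrop]
  | cons h q ih =>
    cases n with
    | zero => simp [myDrop]; rfl
    | succ n => simp [myDrop, ih]

lemma IsPath.length_eq_zero' {u : V} {p : G.Walk u u} (hp : p.IsPath) : p.length = 0 := by
  cases p with
  | nil => rfl
  | cons h q =>
    rw [cons_isPath_iff] at hp
    exact absurd q.end_mem_support hp.2

lemma notMem_edges_ends {u v : V} {p : G.Walk u v} (hp : p.IsPath) (h2 : 2 ≤ p.length) :
    s(u, v) ∉ p.edges := by
  cases p with
  | nil => simp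
  | cons h q =>
    rw [cons_isPath_iff] at hp
    rw [edges_cons, List.mem_cons]
    rintro (heq | hmem)
    · rw [Sym2.eq_iff] at heq
      rcases heq with ⟨-, rfl⟩ | ⟨rfl, -⟩
      · have := hp.1.length_eq_zero'
        simp only [length_cons] at h2
        omega
      · exact hp.2 q.start_mem_support
    · exact hp.2 (q.fst_mem_support_of_mem_edges hmem)

end Walk
end SimpleGraph
section part2

variable {V : Type*} {G : SimpleGraph V} {v : V} {c : G.Walk v v}

namespace SimpleGraph
namespace Walk

/-- In a cycle, the start vertex does not appear among the first `length - 1`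
entries of `support.tail`. -/
lemma IsCycle.start_notMem_take_tail (hc : c.IsCycle) {j : ℕ} (hj : j ≤ c.length - 1) :
    v ∉ c.support.tail.take j := by
  intro hmem
  have hnn : c.support.tail ≠ [] := by
    have := c.length_support
    intro h
    have h3 := hc.three_le_length
    have : c.support.tail.length = c.length := by
      have := c.length_support
      rw [support_eq_cons] at this
      simpa using this
    rw [h] at this
    simp at this
    omega
  have hlast : c.support.tail.getLast hnn = v := by
    rw [List.getLast_tail]
    exact c.getLast_support
  have hdec : c.support.tail.dropLast ++ [v] = c.support.tail := by
    conv_rhs => rw [← List.dropLast_append_getLast hnn, hlast]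
  have hnd : c.support.tail.Nodup := hc.support_nodup
  have hvnot : v ∉ c.support.tail.dropLast := by
    rw [← hdec] at hnd
    have := List.disjoint_of_nodup_append hnd
    intro hv
    exact this hv (by simp)
  apply hvnot
  have hlen : c.support.tail.length = c.length := by
    have := c.length_support
    rw [support_eq_cons] at this
    simpa using this
  have : c.support.tail.take j = c.support.tail.dropLast.take j := by
    rw [List.dropLast_eq_take, List.take_take, hlen]
    congr 1
    omega
  rw [this] at hmem
  exact List.take_subset _ _ hmem

lemma IsCycle.support_tail_length (hc : c.IsCycle) :
    c.support.tail.length = c.length := by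
  have := c.length_support
  rw [support_eq_cons] at this
  simpa using this

lemma IsCycle.myTake_isPath (hc : c.IsCycle) {j : ℕ} (hj : j ≤ c.length - 1) :
    (c.myTake j).IsPath := by
  rw [isPath_def, support_myTake]
  rw [support_eq_cons, List.take_succ_cons]
  exact List.Nodup.cons (hc.start_notMem_take_tail hj)
    ((List.take_sublist _ _).nodup hc.support_nodup)

lemma IsCycle.myDrop_isPath (hc : c.IsCycle) {j : ℕ} (hj1 : 1 ≤ j) (hj2 : j ≤ c.length) :
    (c.myDrop j).IsPath := by
  rw [isPath_def, support_myDrop _ _ hj2]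
  obtain ⟨k, rfl⟩ := Nat.exists_eq_add_of_le hj1
  rw [support_eq_cons, show (1:ℕ) + k = k + 1 from by omega, List.drop_succ_cons]
  exact (List.drop_sublist _ _).nodup hc.support_nodup

lemma IsCycle.start_ne_getVert (hc : c.IsCycle) {j : ℕ} (hj1 : 1 ≤ j)
    (hj2 : j ≤ c.length - 1) : v ≠ c.getVert j := by
  intro h
  have hp : ((c.myTake j).copy rfl h.symm).IsPath :=
    (isPath_copy _ _ _).mpr (hc.myTake_isPath hj2)
  have := hp.length_eq_zero'
  rw [length_copy, length_myTake] at this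
  · omega
  · have := hc.three_le_length; omega

end Walk
end SimpleGraph

end part2
section part3

variable {V : Type*} {G : SimpleGraph V} {v : V} {c : G.Walk v v}

namespace SimpleGraph
namespace Walk

/-- A chord from the start of a cycle to its `j`-th vertex splits it into two cycles. -/
lemma IsCycle.chord_split (hc : c.IsCycle) {j : ℕ} (hj2 : 2 ≤ j) (hjL : j ≤ c.length - 2)
    (hadj : G.Adj v (c.getVert j)) :
    (∃ c₁ : G.Walk v v, c₁.IsCycle ∧ c₁.length = j + 1) ∧
    (∃ c₂ : G.Walk v v, c₂.IsCycle ∧ c₂.length = c.length - j + 1) := by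
  have h3 := hc.three_le_length
  have hjle : j ≤ c.length := by omega
  have hlt : (c.myTake j).length = j := length_myTake c j hjle
  constructor
  · refine ⟨Walk.cons hadj (c.myTake j).reverse, ?_, ?_⟩
    · rw [cons_isCycle_iff]
      refine ⟨(hc.myTake_isPath (by omega)).reverse, ?_⟩
      rw [edges_reverse, List.mem_reverse]
      exact fun hmem => notMem_edges_ends (hc.myTake_isPath (by omega)) (by omega) hmem
    · simp [length_reverse, hlt]
  · refine ⟨Walk.cons hadj (c.myDrop j), ?_, ?_⟩
    · rw [cons_isCycle_iff]
      refine ⟨hc.myDrop_isPath (by omega) hjle, ?_⟩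
      intro hmem
      rw [Sym2.eq_swap] at hmem
      exact notMem_edges_ends (hc.myDrop_isPath (by omega) hjle)
        (by rw [length_myDrop]; omega) hmem
    · simp [length_myDrop]

/-- Rotation of a cycle to start at its `i`-th vertex. -/
def myRotate (c : G.Walk v v) (i : ℕ) : G.Walk (c.getVert i) (c.getVert i) :=
  (c.myDrop i).append (c.myTake i)

lemma length_myRotate {i : ℕ} (hi : i ≤ c.length) : (c.myRotate i).length = c.length := by
  rw [myRotate, length_append, length_myDrop, length_myTake c i hi]
  omega

lemma getVert_myRotate {i k : ℕ} (hk : k < c.length - i) :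
    (c.myRotate i).getVert k = c.getVert (i + k) := by
  rw [myRotate, getVert_append, length_myDrop, if_pos hk, getVert_myDrop]

lemma IsCycle.myRotate (hc : c.IsCycle) {i : ℕ} (hi1 : 1 ≤ i) (hi2 : i ≤ c.length - 1) :
    (c.myRotate i).IsCycle := by
  have h3 := hc.three_le_length
  have hil : i ≤ c.length := by omega
  have htlen := hc.support_tail_length
  rw [isCycle_def]
  refine ⟨⟨?_⟩, ?_, ?_⟩
  · -- edges nodup
    rw [Walk.myRotate, edges_append, edges_myDrop, edges_myTake]
    have hperm : (c.edges.drop i ++ c.edges.take i).Perm c.edges :=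
      List.perm_append_comm.trans (by rw [List.take_append_drop])
    exact hperm.symm.nodup_iff.mp hc.edges_nodup
  · -- ne nil
    intro hnil
    have : (c.myRotate i).length = 0 := by rw [hnil]; rfl
    rw [length_myRotate hil] at this
    omega
  · -- support tail nodup
    rw [Walk.myRotate, support_append, support_myDrop _ _ hil, support_myTake]
    obtain ⟨k, rfl⟩ := Nat.exists_eq_add_of_le hi1
    simp only [show (1:ℕ) + k = k + 1 from by omega] at hil ⊢
    rw [support_eq_cons, List.drop_succ_cons, List.take_succ_cons, List.tail_cons]
    have hne : c.support.tail.drop k ≠ [] := by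
      intro h
      have := congrArg List.length h
      rw [List.length_drop, htlen] at this
      simp at this
      omega
    rw [List.tail_append_of_ne_nil hne, List.tail_drop]
    have hperm : (c.support.tail.drop (k+1) ++ c.support.tail.take (k+1)).Perm c.support.tail :=
      List.perm_append_comm.trans (by rw [List.take_append_drop])
    exact hperm.nodup_iff.mpr hc.support_nodup

end Walk
end SimpleGraph

end part3
open SimpleGraph Walk in
/-- If `n ≥ 9` and a finite simple graph `F` has no cycle whose length lies in
`{⌈(n-1)/2⌉, …, n-1}` while every pair of distinct vertices has a common
neighbor, then `F` has no cycle of length greater than `⌈(n-1)/2⌉ - 1`.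
(Here `⌈(n-1)/2⌉ = n / 2` for natural `n ≥ 1`.) -/
theorem stmt3 (n : ℕ) (hn : 9 ≤ n) {V : Type*} [Fintype V] (F : SimpleGraph V)
    (hcyc : ∀ (v : V) (c : F.Walk v v), c.IsCycle →
      ¬ (n / 2 ≤ c.length ∧ c.length ≤ n - 1))
    (hcodeg : ∀ u v : V, u ≠ v → ∃ w : V, F.Adj u w ∧ F.Adj v w) :
    ∀ (v : V) (c : F.Walk v v), c.IsCycle → c.length ≤ n / 2 - 1 := by
  classical
  by_contra hcon
  push_neg at hcon
  obtain ⟨v₀, c₀, hc₀, hlen₀⟩ := hcon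
  have hS : ∃ L : ℕ, ∃ (u : V) (c : F.Walk u u), c.IsCycle ∧ c.length = L ∧ n / 2 ≤ L :=
    ⟨c₀.length, v₀, c₀, hc₀, rfl, by omega⟩
  set L := Nat.find hS with hLdef
  obtain ⟨v, c, hc, hcL, hmL⟩ := Nat.find_spec hS
  have hmin : ∀ K, K < L →
      ¬ ∃ (u : V) (c' : F.Walk u u), c'.IsCycle ∧ c'.length = K ∧ n / 2 ≤ K :=
    fun K hK => Nat.find_min hS hK
  have hnL : n ≤ L := by
    have := hcyc v c hc
    rw [hcL] at this
    omega
  have key : ∀ (u : V) (c' : F.Walk u u), c'.IsCycle → c'.length = L →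
      ∀ j, 2 ≤ j → j ≤ L - 2 → ¬ F.Adj u (c'.getVert j) := by
    intro u c' hc' hlen j hj2 hjL hadj
    obtain ⟨⟨c₁, hc₁, hl₁⟩, ⟨c₂, hc₂, hl₂⟩⟩ := hc'.chord_split hj2 (by omega) hadj
    have e1 : j + 1 < n / 2 := by
      by_contra h
      exact hmin (j + 1) (by omega) ⟨u, c₁, hc₁, hl₁, by omega⟩
    have e2 : c'.length - j + 1 < n / 2 := by
      by_contra h
      exact hmin (c'.length - j + 1) (by omega) ⟨u, c₂, hc₂, hl₂, by omega⟩
    omega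
  set d := n / 2 - 1 with hd
  have hd3 : 3 ≤ d := by omega
  have hdL : d ≤ c.length - 1 := by omega
  have hne : v ≠ c.getVert d := hc.start_ne_getVert (by omega) hdL
  obtain ⟨w, hvw, hxw⟩ := hcodeg v (c.getVert d) hne
  by_cases hw : w ∈ c.support
  · -- the common neighbor lies on the cycle
    obtain ⟨j, hj_eq, hj_le⟩ := Walk.mem_support_iff_exists_getVert.mp hw
    subst hj_eq
    have hj0 : j ≠ 0 := by
      rintro rfl
      rw [getVert_zero] at hvw
      exact hvw.ne rfl
    have hjlen : j ≠ c.length := by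
      intro h
      rw [h, getVert_length] at hvw
      exact hvw.ne rfl
    have hj1L : j = 1 ∨ j = c.length - 1 := by
      by_contra hj
      push_neg at hj
      exact key v c hc hcL j (by omega) (by omega) hvw
    rcases hj1L with rfl | hj
    · have hr := hc.myRotate (i := 1) (by omega) (by omega)
      have hrl : (c.myRotate 1).length = c.length := length_myRotate (by omega)
      have hg : (c.myRotate 1).getVert (d - 1) = c.getVert d := by
        rw [getVert_myRotate (by omega)]
        congr 1
        omega
      refine key _ (c.myRotate 1) hr (by rw [hrl, hcL]) (d - 1) (by omega) (by omega) ?_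
      rw [hg]
      exact hxw.symm
    · subst hj
      have hr := hc.myRotate (i := d) (by omega) (by omega)
      have hrl : (c.myRotate d).length = c.length := length_myRotate (by omega)
      have hg : (c.myRotate d).getVert (c.length - 1 - d) = c.getVert (c.length - 1) := by
        rw [getVert_myRotate (by omega)]
        congr 1
        omega
      refine key _ (c.myRotate d) hr (by rw [hrl, hcL]) (c.length - 1 - d)
        (by omega) (by omega) ?_
      rw [hg]
      exact hxw
  · -- the common neighbor is off the cycle: build a cycle of length `n/2 + 1`
    have hp : (c.myTake d).IsPath := hc.myTake_isPath hdL
    have hplen : (c.myTake d).length = d := length_myTake c d (by omega)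
    have hwp : w ∉ (c.myTake d).support := by
      intro hmem
      rw [support_myTake] at hmem
      exact hw (List.take_subset _ _ hmem)
    have hqpath : (Walk.cons hxw.symm (c.myTake d).reverse).IsPath := by
      rw [cons_isPath_iff]
      refine ⟨hp.reverse, ?_⟩
      rw [support_reverse, List.mem_reverse]
      exact hwp
    have hCcyc : (Walk.cons hvw (Walk.cons hxw.symm (c.myTake d).reverse)).IsCycle := by
      rw [cons_isCycle_iff]
      refine ⟨hqpath, ?_⟩
      rw [edges_cons, List.mem_cons]
      rintro (heq | hmem)
      · rw [Sym2.eq_iff] at heq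
        rcases heq with ⟨h1, -⟩ | ⟨h1, -⟩
        · exact hvw.ne h1
        · exact hne h1
      · rw [edges_reverse, List.mem_reverse] at hmem
        exact hwp ((c.myTake d).snd_mem_support_of_mem_edges hmem)
    have hClen : (Walk.cons hvw (Walk.cons hxw.symm (c.myTake d).reverse)).length = d + 2 := by
      rw [length_cons, length_cons, length_reverse, hplen]
    exact (hcyc v _ hCcyc) ⟨by omega, by omega⟩
end

section
/- Let F be a finite simple graph on n vertices with no cycle of length longer than ⌈n/2⌉ − 1, in which every vertex has degree at least ⌈(n−1)/3⌉ ≥ 2, every pair of vertices has at least one common neighbor, and no maximum-length path forms a cycle. If v_1 v_2 ... v_ℓ is a path of maximum length in F, then v_1 and v_ℓ have exactly one common neighbor v_c on this path, and moreover N(v_1) ⊆ {v_2,...,v_c} and N(v_ℓ) ⊆ {v_c,...,v_{ℓ−1}}. -/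
namespace Stmt4Aux

open SimpleGraph Walk
set_option linter.unusedSectionVars false

variable {V : Type*} [Fintype V] [DecidableEq V] {F : SimpleGraph V} {u v x w : V}

private lemma getElem_idx_congr {l : List V} {i j : ℕ} (h : i = j) (hi : i < l.length) :
    l[i]'hi = l[j]'(h ▸ hi) := by subst h; rfl

private lemma support_getElem_zero (p : F.Walk u v) (h : 0 < p.support.length) :
    p.support[0]'h = u := by
  rw [List.getElem_of_eq (Walk.support_eq_cons p)]; rfl

private lemma support_getElem_last (p : F.Walk u v)
    (h : p.support.length - 1 < p.support.length) :
    p.support[p.support.length - 1]'h = v := by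
  rw [← List.getLast_eq_getElem]; exact Walk.getLast_support p

private lemma disjoint_take_drop {l : List V} (hnd : l.Nodup) {a b : ℕ} (hab : a ≤ b) :
    (l.take a).Disjoint (l.drop b) := by
  intro x hx hx'
  obtain ⟨i1, h1, e1⟩ := List.mem_iff_getElem.mp hx
  obtain ⟨i2, h2, e2⟩ := List.mem_iff_getElem.mp hx'
  rw [List.getElem_take] at e1
  rw [List.getElem_drop] at e2
  have hlt1 : i1 < a := by simp [List.length_take] at h1; omega
  have h12 : i1 = b + i2 := hnd.getElem_inj_iff.mp (e1.trans e2.symm)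
  omega

private lemma edge_first {t : F.Walk u v} (ht : t.IsPath) {x : V} (hx : s(u, x) ∈ t.edges) :
    ∃ _h1 : 1 < t.support.length, t.support[1] = x := by
  cases t with
  | nil => simp at hx
  | @cons _ c _ h r =>
    refine ⟨by simp [Walk.support_cons], ?_⟩
    have hsup1 : (Walk.cons h r).support[1]'(by simp [Walk.support_cons]) = c := by
      rw [List.getElem_of_eq (Walk.support_cons h r), List.getElem_cons_succ]
      exact support_getElem_zero r _
    rw [Walk.edges_cons, List.mem_cons] at hx
    rcases hx with h1 | h2
    · rcases Sym2.eq_iff.mp h1 with ⟨-, he⟩ | ⟨he1, -⟩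
      · rw [hsup1, ← he]
      · exact absurd he1 h.ne
    · exfalso
      have : u ∈ r.support := Walk.fst_mem_support_of_mem_edges r h2
      exact ((Walk.cons_isPath_iff h r).mp ht).2 this

private lemma support_take_drop {p : F.Walk u v} (hx : x ∈ p.support) :
    (p.takeUntil x hx).support ++ (p.dropUntil x hx).support.tail = p.support := by
  conv_rhs => rw [← Walk.take_spec p hx]
  rw [Walk.support_append]

private lemma support_takeUntil_eq {p : F.Walk u v} (hx : x ∈ p.support) :
    (p.takeUntil x hx).support = p.support.take ((p.takeUntil x hx).length + 1) := by
  rw [← support_take_drop hx, List.take_left' (Walk.length_support _)]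

private lemma takeUntil_len_lt {p : F.Walk u v} (hx : x ∈ p.support) :
    (p.takeUntil x hx).length < p.support.length := by
  have h := congrArg List.length (support_takeUntil_eq hx)
  rw [Walk.length_support, List.length_take] at h
  omega

private lemma support_getElem_takeUntil_len {p : F.Walk u v} (hx : x ∈ p.support)
    (h : (p.takeUntil x hx).length < p.support.length) :
    p.support[(p.takeUntil x hx).length]'h = x := by
  have h2 : (p.takeUntil x hx).support[(p.takeUntil x hx).length]'
      (by rw [Walk.length_support]; omega) = x := by
    have h1 := Walk.getLast_support (p.takeUntil x hx)
    rw [List.getLast_eq_getElem] at h1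
    exact (getElem_idx_congr (by rw [Walk.length_support]; omega) _).trans h1
  have h3 := (List.getElem_of_eq (support_takeUntil_eq hx)
      (i := (p.takeUntil x hx).length) (by rw [Walk.length_support]; omega))
  rw [List.getElem_take] at h3
  exact h3.symm.trans h2

private lemma length_takeUntil_of_getElem {p : F.Walk u v} (hnd : p.support.Nodup) {k : ℕ}
    (hk : k < p.support.length) (hmem : p.support[k]'hk ∈ p.support) :
    (p.takeUntil _ hmem).length = k := by
  have h1 := takeUntil_len_lt hmem
  have h2 := support_getElem_takeUntil_len hmem h1
  exact hnd.getElem_inj_iff.mp h2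

private lemma support_dropUntil_tail_eq {p : F.Walk u v} (hx : x ∈ p.support) :
    (p.dropUntil x hx).support.tail = p.support.drop ((p.takeUntil x hx).length + 1) := by
  rw [← support_take_drop hx, List.drop_left' (Walk.length_support _)]

private lemma support_dropUntil_eq {p : F.Walk u v} (hx : x ∈ p.support) :
    (p.dropUntil x hx).support = p.support.drop ((p.takeUntil x hx).length) := by
  rw [List.drop_eq_getElem_cons (takeUntil_len_lt hx),
    support_getElem_takeUntil_len hx (takeUntil_len_lt hx), ← support_dropUntil_tail_eq hx]
  exact Walk.support_eq_cons _

private lemma length_dropUntil_add {p : F.Walk u v} (hx : x ∈ p.support) :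
    (p.takeUntil x hx).length + (p.dropUntil x hx).length = p.length := by
  have := congrArg Walk.length (Walk.take_spec p hx)
  rwa [Walk.length_append] at this

private lemma nbr_mem_support {p : F.Walk u v} (hp : p.IsPath)
    (hmax : ∀ ⦃a b : V⦄ (q : F.Walk a b), q.IsPath → q.length ≤ p.length)
    (h : F.Adj u w) : w ∈ p.support := by
  by_contra hw
  have hq : (Walk.cons h.symm p).IsPath := (Walk.cons_isPath_iff _ _).mpr ⟨hp, hw⟩
  have := hmax _ hq
  simp [Walk.length_cons] at this


private lemma rot_lemma
    (hnocycle : ∀ ⦃a b : V⦄ (q : F.Walk a b), q.IsPath →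
      (∀ ⦃c d : V⦄ (r : F.Walk c d), r.IsPath → r.length ≤ q.length) → ¬ F.Adj a b)
    {p : F.Walk u v} (hp : p.IsPath)
    (hmax : ∀ ⦃a b : V⦄ (q : F.Walk a b), q.IsPath → q.length ≤ p.length)
    {k : ℕ} (hk : k + 1 < p.support.length)
    (ha : F.Adj u (p.support[k+1]'hk)) :
    ¬ F.Adj v (p.support[k]'(by omega)) := by
  classical
  have hnd : p.support.Nodup := hp.support_nodup
  have hL : p.support.length = p.length + 1 := Walk.length_support p
  have hy : p.support[k]'(by omega) ∈ p.support := List.getElem_mem _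
  have hx : p.support[k+1]'hk ∈ p.support := List.getElem_mem _
  have hky : (p.takeUntil _ hy).length = k := length_takeUntil_of_getElem hnd _ hy
  have hkx : (p.takeUntil _ hx).length = k + 1 := length_takeUntil_of_getElem hnd _ hx
  have hdlen : (p.dropUntil _ hx).length = p.length - (k+1) := by
    have := length_dropUntil_add hx; omega
  let R : F.Walk (p.support[k]'(by omega)) v :=
    (p.takeUntil _ hy).reverse.append (Walk.cons ha (p.dropUntil _ hx))
  have hRsup : R.support = (p.support.take (k+1)).reverse ++ p.support.drop (k+1) := by
    show ((p.takeUntil _ hy).reverse.append (Walk.cons ha (p.dropUntil _ hx))).support = _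
    rw [Walk.support_append, Walk.support_reverse, Walk.support_cons, List.tail_cons,
      support_takeUntil_eq hy, hky, support_dropUntil_eq hx, hkx]
  have hRpath : R.IsPath := by
    apply Walk.IsPath.mk'
    rw [hRsup, List.nodup_append]
    refine ⟨List.nodup_reverse.mpr ((List.take_sublist _ _).nodup hnd),
      (List.drop_sublist _ _).nodup hnd, ?_⟩
    intro a ha1 b ha2 hab
    exact disjoint_take_drop hnd le_rfl (List.mem_reverse.mp ha1) (by rw [hab]; exact ha2)
  have hRlen : R.length = p.length := by
    show ((p.takeUntil _ hy).reverse.append (Walk.cons ha (p.dropUntil _ hx))).length = _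
    rw [Walk.length_append, Walk.length_reverse, Walk.length_cons, hky, hdlen]
    omega
  intro hv
  exact hnocycle R hRpath (fun a b r hr => by rw [hRlen]; exact hmax r hr) hv.symm

private lemma cycA (n : ℕ)
    (hcyc : ∀ (w : V) (c : F.Walk w w), c.IsCycle → c.length ≤ (n + 1) / 2 - 1)
    (hdeg2 : 2 ≤ (n - 1 + 2) / 3)
    {p : F.Walk u v} (hp : p.IsPath)
    {k : ℕ} (hk : k < p.support.length) (ha : F.Adj u (p.support[k]'hk)) :
    k + 1 ≤ (n + 1) / 2 - 1 := by
  classical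
  have hK2 : 2 ≤ (n + 1) / 2 - 1 := by omega
  rcases Nat.lt_or_ge k 2 with hk2 | hk2
  · interval_cases k
    · have h0 := support_getElem_zero p (by omega)
      rw [h0] at ha
      exact absurd ha (F.loopless.irrefl u)
    · omega
  · have hnd : p.support.Nodup := hp.support_nodup
    have hx : p.support[k]'hk ∈ p.support := List.getElem_mem _
    have hkx : (p.takeUntil _ hx).length = k := length_takeUntil_of_getElem hnd hk hx
    have htp : (p.takeUntil _ hx).IsPath := hp.takeUntil hx
    have hC : (Walk.cons ha (p.takeUntil _ hx).reverse).IsCycle := by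
      rw [Walk.cons_isCycle_iff]
      refine ⟨htp.reverse, fun hmem => ?_⟩
      rw [Walk.edges_reverse, List.mem_reverse] at hmem
      obtain ⟨h1, h2⟩ := edge_first htp hmem
      have h3 := (List.getElem_of_eq (support_takeUntil_eq hx) (i := 1) h1).symm.trans h2
      rw [List.getElem_take] at h3
      have := hnd.getElem_inj_iff.mp h3
      omega
    have := hcyc u _ hC
    rw [Walk.length_cons, Walk.length_reverse, hkx] at this
    omega

private lemma theta (n : ℕ)
    (hcyc : ∀ (w : V) (c : F.Walk w w), c.IsCycle → c.length ≤ (n + 1) / 2 - 1)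
    {p : F.Walk u v} (hp : p.IsPath)
    {i j : ℕ} (hi1 : 1 ≤ i) (hij : i < j) (hj : j + 1 < p.support.length)
    (hvi : F.Adj v (p.support[i]'(by omega)))
    (huj : F.Adj u (p.support[j]'(by omega))) :
    i + (p.length - j) + 2 ≤ (n + 1) / 2 - 1 := by
  classical
  have hnd : p.support.Nodup := hp.support_nodup
  have hL : p.support.length = p.length + 1 := Walk.length_support p
  have hyi : p.support[i]'(by omega) ∈ p.support := List.getElem_mem _
  have hxj : p.support[j]'(by omega) ∈ p.support := List.getElem_mem _
  have hki : (p.takeUntil _ hyi).length = i := length_takeUntil_of_getElem hnd _ hyi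
  have hkj : (p.takeUntil _ hxj).length = j := length_takeUntil_of_getElem hnd _ hxj
  have hdlen : (p.dropUntil _ hxj).length = p.length - j := by
    have := length_dropUntil_add hxj; omega
  let W : F.Walk (p.support[j]'(by omega)) u :=
    (p.dropUntil _ hxj).append (Walk.cons hvi (p.takeUntil _ hyi).reverse)
  have hWsup : W.support = p.support.drop j ++ (p.support.take (i+1)).reverse := by
    show ((p.dropUntil _ hxj).append (Walk.cons hvi (p.takeUntil _ hyi).reverse)).support = _
    rw [Walk.support_append, Walk.support_cons, List.tail_cons, Walk.support_reverse,
      support_dropUntil_eq hxj, hkj, support_takeUntil_eq hyi, hki]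
  have hWpath : W.IsPath := by
    apply Walk.IsPath.mk'
    rw [hWsup, List.nodup_append]
    refine ⟨(List.drop_sublist _ _).nodup hnd,
      List.nodup_reverse.mpr ((List.take_sublist _ _).nodup hnd), ?_⟩
    intro a ha1 b ha2 hab
    exact disjoint_take_drop hnd (show i + 1 ≤ j by omega) (List.mem_reverse.mp ha2) (by rw [← hab]; exact ha1)
  have hD : (Walk.cons huj W).IsCycle := by
    rw [Walk.cons_isCycle_iff]
    refine ⟨hWpath, fun hmem => ?_⟩
    have hmem' : s(u, p.support[j]'(by omega)) ∈ W.reverse.edges := by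
      rw [Walk.edges_reverse, List.mem_reverse]; exact hmem
    obtain ⟨h1, h2⟩ := edge_first hWpath.reverse hmem'
    have h3 : W.reverse.support = p.support.take (i+1) ++ (p.support.drop j).reverse := by
      rw [Walk.support_reverse, hWsup, List.reverse_append, List.reverse_reverse]
    have h4 := (List.getElem_of_eq h3 h1).symm.trans h2
    rw [List.getElem_append_left (by simp [List.length_take]; omega)] at h4
    rw [List.getElem_take] at h4
    have := hnd.getElem_inj_iff.mp h4
    omega
  have hlen := hcyc u _ hD
  rw [Walk.length_cons, Walk.length_append, Walk.length_cons, Walk.length_reverse,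
    hdlen, hki] at hlen
  omega


private lemma nbr_mem_support' {p : F.Walk u v} (hp : p.IsPath)
    (hmax : ∀ ⦃a b : V⦄ (q : F.Walk a b), q.IsPath → q.length ≤ p.length)
    (h : F.Adj v w) : w ∈ p.support := by
  have := nbr_mem_support (p := p.reverse) hp.reverse
    (fun a b q hq => by rw [Walk.length_reverse]; exact hmax q hq) h
  rwa [Walk.support_reverse, List.mem_reverse] at this

private lemma main_side (n : ℕ)
    (hcyc : ∀ (w : V) (c : F.Walk w w), c.IsCycle → c.length ≤ (n + 1) / 2 - 1)
    (hdeg2 : 2 ≤ (n - 1 + 2) / 3)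
    (hdeg : ∀ w : V, (n - 1 + 2) / 3 ≤ (F.neighborSet w).ncard)
    (hnocycle : ∀ ⦃a b : V⦄ (q : F.Walk a b), q.IsPath →
      (∀ ⦃c d : V⦄ (r : F.Walk c d), r.IsPath → r.length ≤ q.length) → ¬ F.Adj a b)
    {u v : V} (p : F.Walk u v) (hp : p.IsPath)
    (hmax : ∀ ⦃a b : V⦄ (q : F.Walk a b), q.IsPath → q.length ≤ p.length)
    {i j : ℕ} (hi : i < p.support.length) (hj : j < p.support.length)
    (hui : F.Adj u (p.support[i]'hi)) (hvi : F.Adj v (p.support[i]'hi))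
    (huj : F.Adj u (p.support[j]'hj)) (hij : i < j) : False := by
  classical
  have hnd : p.support.Nodup := hp.support_nodup
  have hL : p.support.length = p.length + 1 := Walk.length_support p
  have huv : ¬ F.Adj u v := hnocycle p hp hmax
  have h0 : p.support[0]'(by omega) = u := support_getElem_zero p _
  have hlast : p.support[p.length]'(by omega) = v := by
    refine (getElem_idx_congr (by omega) _).trans (support_getElem_last p (by omega))
  -- index facts for any neighbor of u
  have hidxu : ∀ w : V, F.Adj u w →
      ∃ hlt : p.support.idxOf w < p.support.length,
        p.support[p.support.idxOf w]'hlt = w ∧ 1 ≤ p.support.idxOf w ∧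
        p.support.idxOf w ≤ p.length - 1 := by
    intro w hw
    have hmem := nbr_mem_support hp hmax hw
    have hlt := List.idxOf_lt_length_iff.mpr hmem
    have hg : p.support[p.support.idxOf w]'hlt = w := List.getElem_idxOf hlt
    refine ⟨hlt, hg, ?_, ?_⟩
    · rcases Nat.eq_zero_or_pos (p.support.idxOf w) with hz | hz
      · exfalso
        have : u = w := by rw [← h0, ← hg]; exact getElem_idx_congr hz.symm _
        rw [← this] at hw; exact F.loopless.irrefl u hw
      · omega
    · have hne : p.support.idxOf w ≠ p.length := by
        intro he
        have : v = w := by rw [← hlast, ← hg]; exact getElem_idx_congr he.symm _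
        rw [← this] at hw; exact huv hw
      omega
  have hidxv : ∀ w : V, F.Adj v w →
      ∃ hlt : p.support.idxOf w < p.support.length,
        p.support[p.support.idxOf w]'hlt = w ∧ 1 ≤ p.support.idxOf w ∧
        p.support.idxOf w ≤ p.length - 1 := by
    intro w hw
    have hmem := nbr_mem_support' hp hmax hw
    have hlt := List.idxOf_lt_length_iff.mpr hmem
    have hg : p.support[p.support.idxOf w]'hlt = w := List.getElem_idxOf hlt
    refine ⟨hlt, hg, ?_, ?_⟩
    · rcases Nat.eq_zero_or_pos (p.support.idxOf w) with hz | hz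
      · exfalso
        have : u = w := by rw [← h0, ← hg]; exact getElem_idx_congr hz.symm _
        rw [← this] at hw; exact huv hw.symm
      · omega
    · have hne : p.support.idxOf w ≠ p.length := by
        intro he
        have : v = w := by rw [← hlast, ← hg]; exact getElem_idx_congr he.symm _
        rw [← this] at hw; exact F.loopless.irrefl v hw
      omega
  -- the finsets of neighbor-indices
  set Au : Finset ℕ := (Finset.univ.filter (fun w => F.Adj u w)).image
    (fun w => p.support.idxOf w) with hAudef
  set Bv : Finset ℕ := (Finset.univ.filter (fun w => F.Adj v w)).image
    (fun w => p.support.idxOf w) with hBvdef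
  have hdegu : ((n-1+2)/3 : ℕ) ≤ (Finset.univ.filter (fun w => F.Adj u w)).card := by
    have h1 : F.neighborSet u = ↑(Finset.univ.filter (fun w => F.Adj u w)) := by
      ext z; simp [SimpleGraph.mem_neighborSet]
    have h2 := hdeg u
    rwa [h1, Set.ncard_coe_finset] at h2
  have hdegv : ((n-1+2)/3 : ℕ) ≤ (Finset.univ.filter (fun w => F.Adj v w)).card := by
    have h1 : F.neighborSet v = ↑(Finset.univ.filter (fun w => F.Adj v w)) := by
      ext z; simp [SimpleGraph.mem_neighborSet]
    have h2 := hdeg v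
    rwa [h1, Set.ncard_coe_finset] at h2
  have hinj : ∀ (P : V → Prop) (hmem : ∀ w, P w → w ∈ p.support),
      Set.InjOn (fun w => p.support.idxOf w) ↑(Finset.univ.filter (fun w => P w)) := by
    intro P hmem w1 hw1 w2 hw2 he
    simp only [Finset.coe_filter, Set.mem_setOf_eq, Finset.mem_univ, true_and] at hw1 hw2
    have m1 := hmem _ hw1
    have m2 := hmem _ hw2
    have g1 : p.support[p.support.idxOf w1]'(List.idxOf_lt_length_iff.mpr m1) = w1 :=
      List.getElem_idxOf _
    have g2 : p.support[p.support.idxOf w2]'(List.idxOf_lt_length_iff.mpr m2) = w2 :=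
      List.getElem_idxOf _
    rw [← g1, ← g2]
    exact getElem_idx_congr he _
  have hAucard : (n-1+2)/3 ≤ Au.card := by
    rw [hAudef, Finset.card_image_of_injOn (hinj _ (fun w hw => nbr_mem_support hp hmax hw))]
    exact hdegu
  have hBvcard : (n-1+2)/3 ≤ Bv.card := by
    rw [hBvdef, Finset.card_image_of_injOn (hinj _ (fun w hw => nbr_mem_support' hp hmax hw))]
    exact hdegv
  -- membership characterizations
  have hAuChar : ∀ k ∈ Au, ∃ hk : k < p.support.length,
      F.Adj u (p.support[k]'hk) ∧ 1 ≤ k ∧ k ≤ p.length - 1 := by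
    intro k hk
    rw [hAudef, Finset.mem_image] at hk
    obtain ⟨w, hw, rfl⟩ := hk
    rw [Finset.mem_filter] at hw
    obtain ⟨hlt, hg, h1, h2⟩ := hidxu w hw.2
    exact ⟨hlt, by rw [hg]; exact hw.2, h1, h2⟩
  have hBvChar : ∀ k ∈ Bv, ∃ hk : k < p.support.length,
      F.Adj v (p.support[k]'hk) ∧ 1 ≤ k ∧ k ≤ p.length - 1 := by
    intro k hk
    rw [hBvdef, Finset.mem_image] at hk
    obtain ⟨w, hw, rfl⟩ := hk
    rw [Finset.mem_filter] at hw
    obtain ⟨hlt, hg, h1, h2⟩ := hidxv w hw.2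
    exact ⟨hlt, by rw [hg]; exact hw.2, h1, h2⟩
  -- lower bound on path length : 2δ ≤ m
  have hdisj : Disjoint (Au.image (· - 1)) Bv := by
    rw [Finset.disjoint_left]
    intro t ht1 ht2
    obtain ⟨k, hkA, rfl⟩ := Finset.mem_image.mp ht1
    obtain ⟨hk, hadj, hk1, hkm⟩ := hAuChar k hkA
    obtain ⟨ht, hadjv, _, _⟩ := hBvChar _ ht2
    have hrot := rot_lemma hnocycle hp hmax (k := k - 1)
      (show k - 1 + 1 < p.support.length by omega)
      (by rw [getElem_idx_congr (show k - 1 + 1 = k by omega)]; exact hadj)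
    exact hrot (by rw [getElem_idx_congr (show k - 1 = k - 1 by rfl)]; exact hadjv)
  have hAu1card : (n-1+2)/3 ≤ (Au.image (· - 1)).card := by
    rw [Finset.card_image_of_injOn ?_]
    · exact hAucard
    · intro a ha b hb he
      obtain ⟨_, _, ha1, _⟩ := hAuChar a (Finset.mem_coe.mp ha)
      obtain ⟨_, _, hb1, _⟩ := hAuChar b (Finset.mem_coe.mp hb)
      simp only at he
      omega
  have hsub1 : (Au.image (· - 1)) ∪ Bv ⊆ Finset.range p.length := by
    intro t ht
    rcases Finset.mem_union.mp ht with ht | ht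
    · obtain ⟨k, hkA, rfl⟩ := Finset.mem_image.mp ht
      obtain ⟨_, _, hk1, hkm⟩ := hAuChar k hkA
      rw [Finset.mem_range]; omega
    · obtain ⟨_, _, h1, h2⟩ := hBvChar _ ht
      rw [Finset.mem_range]; omega
  have hcount1 : 2 * ((n-1+2)/3) ≤ p.length := by
    have hc := Finset.card_le_card hsub1
    rw [Finset.card_union_of_disjoint hdisj, Finset.card_range] at hc
    omega
  have hi1 : 1 ≤ i := by
    rcases Nat.eq_zero_or_pos i with hz | hz
    · exfalso
      rw [getElem_idx_congr hz, h0] at hui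
      exact F.loopless.irrefl u hui
    · omega
  have hidxget : ∀ (k : ℕ) (hk : k < p.support.length),
      p.support.idxOf (p.support[k]'hk) = k := by
    intro k hk
    have hmem : p.support[k]'hk ∈ p.support := List.getElem_mem _
    have hlt := List.idxOf_lt_length_iff.mpr hmem
    exact hnd.getElem_inj_iff.mp (List.getElem_idxOf hlt)
  have hjAu : j ∈ Au := by
    rw [hAudef, Finset.mem_image]
    exact ⟨p.support[j]'hj, Finset.mem_filter.mpr ⟨Finset.mem_univ _, huj⟩, hidxget j hj⟩
  obtain ⟨_, _, hj1, hjm⟩ := hAuChar j hjAu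
  have hthj : i + (p.length - j) + 2 ≤ (n+1)/2 - 1 :=
    theta n hcyc hp hi1 hij (by omega) hvi huj
  have hKj : j + 1 ≤ (n+1)/2 - 1 := cycA n hcyc hdeg2 hp hj huj
  have hsub : Au ⊆ Finset.Icc 1 i ∪
      Finset.Icc (i + p.length + 2 - ((n+1)/2 - 1)) ((n+1)/2 - 1 - 1) := by
    intro k hk
    obtain ⟨hklt, hadjk, hk1, hkm⟩ := hAuChar k hk
    rcases le_or_gt k i with hle | hgt
    · exact Finset.mem_union_left _ (Finset.mem_Icc.mpr ⟨hk1, hle⟩)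
    · have ht := theta n hcyc hp hi1 hgt (by omega) hvi hadjk
      have hc := cycA n hcyc hdeg2 hp hklt hadjk
      refine Finset.mem_union_right _ (Finset.mem_Icc.mpr ⟨?_, ?_⟩) <;> omega
  have hcard2 : Au.card ≤ (Finset.Icc 1 i).card +
      (Finset.Icc (i + p.length + 2 - ((n+1)/2 - 1)) ((n+1)/2 - 1 - 1)).card :=
    le_trans (Finset.card_le_card hsub) (Finset.card_union_le _ _)
  rw [Nat.card_Icc, Nat.card_Icc] at hcard2
  omega

end Stmt4Aux

open Stmt4Aux SimpleGraph Walk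

/-- Let `F` be a graph on `n` vertices with no cycle of length longer than
`⌈n/2⌉ - 1`, minimum degree at least `⌈(n-1)/3⌉ ≥ 2`, every two distinct
vertices having a common neighbor, and such that no maximum-length path has
adjacent endpoints.  If `v_1 … v_ℓ` is a maximum-length path then its endpoints
have exactly one common neighbor `v_c` on the path, `N(v_1) ⊆ {v_2,…,v_c}` and
`N(v_ℓ) ⊆ {v_c,…,v_{ℓ-1}}`.  (Here `⌈n/2⌉ = (n+1)/2` and
`⌈(n-1)/3⌉ = (n-1+2)/3` as naturals.) -/
theorem stmt4 {V : Type*} [Fintype V] [DecidableEq V] (F : SimpleGraph V) (n : ℕ)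
    (hcard : Fintype.card V = n)
    (hcyc : ∀ (w : V) (c : F.Walk w w), c.IsCycle → c.length ≤ (n + 1) / 2 - 1)
    (hdeg2 : 2 ≤ (n - 1 + 2) / 3)
    (hdeg : ∀ w : V, (n - 1 + 2) / 3 ≤ (F.neighborSet w).ncard)
    (hcodeg : ∀ a b : V, a ≠ b → ∃ w : V, F.Adj a w ∧ F.Adj b w)
    (hnocycle : ∀ ⦃a b : V⦄ (q : F.Walk a b), q.IsPath →
      (∀ ⦃c d : V⦄ (r : F.Walk c d), r.IsPath → r.length ≤ q.length) → ¬ F.Adj a b)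
    {u v : V} (p : F.Walk u v) (hp : p.IsPath)
    (hmax : ∀ ⦃a b : V⦄ (q : F.Walk a b), q.IsPath → q.length ≤ p.length) :
    ∃ (i : ℕ) (hi : i < p.support.length),
      F.Adj u (p.support.get ⟨i, hi⟩) ∧ F.Adj v (p.support.get ⟨i, hi⟩) ∧
      (∀ w ∈ p.support, F.Adj u w → F.Adj v w → w = p.support.get ⟨i, hi⟩) ∧
      (∀ w : V, F.Adj u w → w ∈ (p.support.take (i + 1)).drop 1) ∧
      (∀ w : V, F.Adj v w → w ∈ (p.support.drop i).dropLast) := by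
  classical
  have hnd : p.support.Nodup := hp.support_nodup
  have hL : p.support.length = p.length + 1 := Walk.length_support p
  have huv : ¬ F.Adj u v := hnocycle p hp hmax
  have h0 : p.support[0]'(by omega) = u := support_getElem_zero p _
  have hlastv : p.support[p.length]'(by omega) = v :=
    (getElem_idx_congr (by omega) _).trans (support_getElem_last p (by omega))
  -- p has positive length
  obtain ⟨w1, hw1⟩ : ∃ w, F.Adj u w := by
    have h := hdeg u
    have h2 : (F.neighborSet u).ncard ≠ 0 := by omega
    obtain ⟨w, hw⟩ := Set.nonempty_of_ncard_ne_zero h2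
    exact ⟨w, hw⟩
  have hm1 : 1 ≤ p.length := by
    have hq : (Walk.cons hw1 Walk.nil).IsPath := by
      rw [Walk.cons_isPath_iff]
      exact ⟨Walk.IsPath.nil, by simp [Walk.support_nil]; exact hw1.ne⟩
    have := hmax _ hq
    simpa using this
  have hne : u ≠ v := by
    intro he
    have : (0 : ℕ) = p.length := hnd.getElem_inj_iff.mp (by rw [h0, hlastv, he])
    omega
  obtain ⟨w₀, hw₀u, hw₀v⟩ := hcodeg u v hne
  have hw0mem : w₀ ∈ p.support := nbr_mem_support hp hmax hw₀u
  have hi : p.support.idxOf w₀ < p.support.length := List.idxOf_lt_length_iff.mpr hw0mem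
  set i := p.support.idxOf w₀ with hidef
  have hgi : p.support[i]'hi = w₀ := List.getElem_idxOf hi
  have hrevlen : p.reverse.support.length = p.length + 1 := by
    rw [Walk.support_reverse, List.length_reverse, hL]
  have hmaxR : ∀ ⦃a b : V⦄ (q : F.Walk a b), q.IsPath → q.length ≤ p.reverse.length :=
    fun a b q hq => by rw [Walk.length_reverse]; exact hmax q hq
  have hrevget : ∀ (t : ℕ) (h : t < p.support.length),
      p.reverse.support[p.length - t]'(by omega) = p.support[t]'h := by
    intro t h
    have h1 := List.getElem_of_eq (Walk.support_reverse p) (i := p.length - t)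
      (by rw [hrevlen]; omega)
    rw [List.getElem_reverse] at h1
    refine h1.trans ?_
    exact getElem_idx_congr (by omega) _
  -- the two half-claims
  have uside : ∀ w : V, F.Adj u w → p.support.idxOf w ≤ i := by
    intro w hw
    by_contra hcon
    have hwm : w ∈ p.support := nbr_mem_support hp hmax hw
    have hiw : p.support.idxOf w < p.support.length := List.idxOf_lt_length_iff.mpr hwm
    have hgw : p.support[p.support.idxOf w]'hiw = w := List.getElem_idxOf hiw
    exact main_side n hcyc hdeg2 hdeg hnocycle p hp hmax hi hiw
      (by rw [hgi]; exact hw₀u) (by rw [hgi]; exact hw₀v)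
      (by rw [hgw]; exact hw) (by omega)
  have vside : ∀ w : V, F.Adj v w → i ≤ p.support.idxOf w := by
    intro w hw
    by_contra hcon
    have hwm : w ∈ p.support := nbr_mem_support' hp hmax hw
    have hiw : p.support.idxOf w < p.support.length := List.idxOf_lt_length_iff.mpr hwm
    have hgw : p.support[p.support.idxOf w]'hiw = w := List.getElem_idxOf hiw
    refine main_side n hcyc hdeg2 hdeg hnocycle p.reverse hp.reverse hmaxR
      (i := p.length - i) (j := p.length - p.support.idxOf w)
      (by omega) (by omega) ?_ ?_ ?_ (by omega)
    · rw [hrevget i hi, hgi]; exact hw₀v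
    · rw [hrevget i hi, hgi]; exact hw₀u
    · rw [hrevget _ hiw, hgw]; exact hw
  refine ⟨i, hi, ?_, ?_, ?_, ?_, ?_⟩
  · rw [List.get_eq_getElem, hgi]; exact hw₀u
  · rw [List.get_eq_getElem, hgi]; exact hw₀v
  · intro w hwm hwu hwv
    have hiw : p.support.idxOf w < p.support.length := List.idxOf_lt_length_iff.mpr hwm
    have hgw : p.support[p.support.idxOf w]'hiw = w := List.getElem_idxOf hiw
    have h1 := uside w hwu
    have h2 := vside w hwv
    have : p.support.idxOf w = i := le_antisymm h1 h2
    rw [List.get_eq_getElem]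
    exact hgw.symm.trans (getElem_idx_congr this hiw)
  · intro w hw
    have hwm : w ∈ p.support := nbr_mem_support hp hmax hw
    have hiw : p.support.idxOf w < p.support.length := List.idxOf_lt_length_iff.mpr hwm
    have hgw : p.support[p.support.idxOf w]'hiw = w := List.getElem_idxOf hiw
    have hle : p.support.idxOf w ≤ i := uside w hw
    have hpos : 1 ≤ p.support.idxOf w := by
      rcases Nat.eq_zero_or_pos (p.support.idxOf w) with hz | hz
      · exfalso
        have : u = w := by rw [← h0, ← hgw]; exact getElem_idx_congr hz.symm _
        rw [← this] at hw; exact F.loopless.irrefl u hw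
      · omega
    apply List.mem_iff_getElem.mpr
    refine ⟨p.support.idxOf w - 1, ?_, ?_⟩
    · simp only [List.length_drop, List.length_take]
      omega
    · rw [List.getElem_drop, List.getElem_take]
      exact Eq.trans (getElem_idx_congr (by omega) _) hgw
  · intro w hw
    have hwm : w ∈ p.support := nbr_mem_support' hp hmax hw
    have hiw : p.support.idxOf w < p.support.length := List.idxOf_lt_length_iff.mpr hwm
    have hgw : p.support[p.support.idxOf w]'hiw = w := List.getElem_idxOf hiw
    have hge : i ≤ p.support.idxOf w := vside w hw
    have hlt : p.support.idxOf w < p.length := by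
      have : p.support.idxOf w ≠ p.length := by
        intro he
        have : v = w := by rw [← hlastv, ← hgw]; exact getElem_idx_congr he.symm _
        rw [← this] at hw; exact F.loopless.irrefl v hw
      omega
    apply List.mem_iff_getElem.mpr
    refine ⟨p.support.idxOf w - i, ?_, ?_⟩
    · simp only [List.length_dropLast, List.length_drop]
      omega
    · rw [List.getElem_dropLast, List.getElem_drop]
      exact Eq.trans (getElem_idx_congr (by omega) _) hgw
end

section
/- Let n ≥ 6 and let C̃_n be the cycle on vertices {0,...,n−1} (edges i ~ i+1 for 0 ≤ i ≤ n−2 and n−1 ~ 0) with the additional chord 0 ~ 2. Let S consist of the members of {3,...,n−1} divisible by 3, together with 0 if n−1 is not divisible by 3. Then C̃_n − S has exactly ⌈(n−1)/3⌉ connected components, each a clique of size at most 3. -/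
/-- `C̃_n`: the cycle on `{0,…,n-1}` with the additional chord `0 ~ 2`. -/
def cycleTilde (n : ℕ) : SimpleGraph (Fin n) :=
  SimpleGraph.fromRel (fun i j =>
    (j : ℕ) = (i : ℕ) + 1 ∨ ((i : ℕ) = n - 1 ∧ (j : ℕ) = 0) ∨
    ((i : ℕ) = 0 ∧ (j : ℕ) = 2))

namespace Stmt6Aux

abbrev S (n : ℕ) : Set (Fin n) :=
  {v : Fin n | ¬ ((3 ≤ (v : ℕ) ∧ 3 ∣ (v : ℕ)) ∨ (¬ (3 ∣ (n - 1)) ∧ (v : ℕ) = 0))}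

abbrev G (n : ℕ) := (cycleTilde n).induce (S n)

def fv (n : ℕ) (u : ↥(S n)) : ℕ :=
  if ((u : Fin n) : ℕ) = 0 then 1 else (((u : Fin n) : ℕ) + 2) / 3

lemma mem_arith {n : ℕ} (u : ↥(S n)) :
    (((u:Fin n):ℕ) < 3 ∨ ¬ 3 ∣ ((u:Fin n):ℕ)) ∧ (3 ∣ (n-1) ∨ ((u:Fin n):ℕ) ≠ 0) := by
  have h := u.2
  simp only [S, Set.mem_setOf_eq] at h
  omega

lemma adj_iff {n : ℕ} (u v : ↥(S n)) :
    (G n).Adj u v ↔ ((u:Fin n):ℕ) ≠ ((v:Fin n):ℕ) ∧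
      ((((v:Fin n):ℕ) = ((u:Fin n):ℕ) + 1 ∨ (((u:Fin n):ℕ) = n - 1 ∧ ((v:Fin n):ℕ) = 0) ∨
        (((u:Fin n):ℕ) = 0 ∧ ((v:Fin n):ℕ) = 2)) ∨
       (((u:Fin n):ℕ) = ((v:Fin n):ℕ) + 1 ∨ (((v:Fin n):ℕ) = n - 1 ∧ ((u:Fin n):ℕ) = 0) ∨
        (((v:Fin n):ℕ) = 0 ∧ ((u:Fin n):ℕ) = 2))) := by
  simp only [G, SimpleGraph.induce, cycleTilde, SimpleGraph.comap_adj, SimpleGraph.fromRel_adj,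
    Function.Embedding.coe_subtype, ne_eq, ← Fin.val_eq_val]

lemma key1 {n : ℕ} (hn : 6 ≤ n) (u v : ↥(S n)) (h : (G n).Adj u v) : fv n u = fv n v := by
  rw [adj_iff] at h
  have hu := mem_arith u
  have hv := mem_arith v
  have hun : ((u:Fin n):ℕ) < n := (u : Fin n).isLt
  have hvn : ((v:Fin n):ℕ) < n := (v : Fin n).isLt
  simp only [fv]
  split_ifs <;> omega

lemma key2 {n : ℕ} (hn : 6 ≤ n) (u v : ↥(S n)) (hne : ((u:Fin n):ℕ) ≠ ((v:Fin n):ℕ))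
    (hf : fv n u = fv n v) : (G n).Adj u v := by
  rw [adj_iff]
  have hu := mem_arith u
  have hv := mem_arith v
  have hun : ((u:Fin n):ℕ) < n := (u : Fin n).isLt
  have hvn : ((v:Fin n):ℕ) < n := (v : Fin n).isLt
  simp only [fv] at hf
  split_ifs at hf <;> (refine ⟨hne, ?_⟩) <;> omega

lemma reach_fv {n : ℕ} (hn : 6 ≤ n) {u v : ↥(S n)} (h : (G n).Reachable u v) :
    fv n u = fv n v := by
  obtain ⟨p⟩ := h
  induction p with
  | nil => rfl
  | cons h _ ih => exact (key1 hn _ _ h).trans ih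

end Stmt6Aux

/-- For `n ≥ 6`, deleting from `C̃_n` the vertices of `{3,…,n-1}` divisible by 3
(together with `0` if `3 ∤ n-1`) leaves exactly `⌈(n-1)/3⌉` connected components,
each of which is a clique of size at most 3. -/
theorem stmt6 (n : ℕ) (hn : 6 ≤ n) :
    Nat.card ((cycleTilde n).induce
        {v : Fin n | ¬ ((3 ≤ (v : ℕ) ∧ 3 ∣ (v : ℕ)) ∨ (¬ (3 ∣ (n - 1)) ∧ (v : ℕ) = 0))}).ConnectedComponent
      = (n - 1 + 2) / 3 ∧
    ∀ c : ((cycleTilde n).induce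
        {v : Fin n | ¬ ((3 ≤ (v : ℕ) ∧ 3 ∣ (v : ℕ)) ∨ (¬ (3 ∣ (n - 1)) ∧ (v : ℕ) = 0))}).ConnectedComponent,
      ((cycleTilde n).induce
        {v : Fin n | ¬ ((3 ≤ (v : ℕ) ∧ 3 ∣ (v : ℕ)) ∨ (¬ (3 ∣ (n - 1)) ∧ (v : ℕ) = 0))}).IsClique
        {w | ((cycleTilde n).induce
          {v : Fin n | ¬ ((3 ≤ (v : ℕ) ∧ 3 ∣ (v : ℕ)) ∨ (¬ (3 ∣ (n - 1)) ∧ (v : ℕ) = 0))}).connectedComponentMk w = c} ∧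
      {w | ((cycleTilde n).induce
          {v : Fin n | ¬ ((3 ≤ (v : ℕ) ∧ 3 ∣ (v : ℕ)) ∨ (¬ (3 ∣ (n - 1)) ∧ (v : ℕ) = 0))}).connectedComponentMk w = c}.ncard ≤ 3 := by
  classical
  have hvlt : ∀ k : Fin ((n+1)/3), 3 * (k:ℕ) + 1 < n := by
    intro k; have := k.isLt; omega
  have hmem : ∀ k : Fin ((n+1)/3), (⟨3*(k:ℕ)+1, hvlt k⟩ : Fin n) ∈ Stmt6Aux.S n := by
    intro k; simp only [Stmt6Aux.S, Set.mem_setOf_eq]; omega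
  let vert : Fin ((n+1)/3) → ↥(Stmt6Aux.S n) := fun k => ⟨⟨3*(k:ℕ)+1, hvlt k⟩, hmem k⟩
  have hfvert : ∀ k, Stmt6Aux.fv n (vert k) = (k:ℕ) + 1 := by
    intro k
    show (if 3*(k:ℕ)+1 = 0 then 1 else (3*(k:ℕ)+1+2)/3) = (k:ℕ)+1
    rw [if_neg (by omega : ¬(3*(k:ℕ)+1 = 0))]
    omega
  let F : Fin ((n+1)/3) → (Stmt6Aux.G n).ConnectedComponent :=
    fun k => (Stmt6Aux.G n).connectedComponentMk (vert k)
  have hsame : ∀ u v : ↥(Stmt6Aux.S n), Stmt6Aux.fv n u = Stmt6Aux.fv n v →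
      (Stmt6Aux.G n).connectedComponentMk u = (Stmt6Aux.G n).connectedComponentMk v := by
    intro u v hf
    by_cases he : u = v
    · rw [he]
    · have hne : ((u:Fin n):ℕ) ≠ ((v:Fin n):ℕ) := by
        intro h; exact he (Subtype.ext (Fin.ext h))
      exact SimpleGraph.ConnectedComponent.eq.mpr (Stmt6Aux.key2 hn u v hne hf).reachable
  have hbij : Function.Bijective F := by
    constructor
    · intro k k' h
      have h2 := Stmt6Aux.reach_fv hn (SimpleGraph.ConnectedComponent.eq.mp h)
      rw [hfvert, hfvert] at h2
      exact Fin.ext (by omega)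
    · intro c
      obtain ⟨w, rfl⟩ := c.exists_rep
      have hm := Stmt6Aux.mem_arith w
      have hwb : ((w:Fin n):ℕ) < n := (w:Fin n).isLt
      have hw1 : 1 ≤ Stmt6Aux.fv n w ∧ Stmt6Aux.fv n w ≤ (n+1)/3 := by
        simp only [Stmt6Aux.fv]; split_ifs <;> omega
      refine ⟨⟨Stmt6Aux.fv n w - 1, by omega⟩, ?_⟩
      apply hsame
      rw [hfvert]
      simp only []
      omega
  constructor
  · have hfin : Nat.card (Fin ((n+1)/3)) = (n+1)/3 := by simp
    rw [show (n-1+2)/3 = (n+1)/3 by omega]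
    exact (Nat.card_eq_of_bijective F hbij).symm.trans hfin
  · intro c
    constructor
    · rw [SimpleGraph.isClique_iff]
      intro u hu v hv hne
      have h1 : (Stmt6Aux.G n).connectedComponentMk u = (Stmt6Aux.G n).connectedComponentMk v := by
        rw [Set.mem_setOf_eq] at hu hv
        rw [hu, hv]
      have hf := Stmt6Aux.reach_fv hn (SimpleGraph.ConnectedComponent.eq.mp h1)
      have hne' : ((u:Fin n):ℕ) ≠ ((v:Fin n):ℕ) := fun h => hne (Subtype.ext (Fin.ext h))
      exact Stmt6Aux.key2 hn u v hne' hf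
    · have h3 : (↑({0,1,2} : Finset ℕ) : Set ℕ).ncard = 3 := by
        rw [Set.ncard_coe_finset]; rfl
      refine le_trans (Set.ncard_le_ncard_of_injOn (t := (↑({0,1,2} : Finset ℕ) : Set ℕ))
        (fun w => ((w:Fin n):ℕ) % 3) ?_ ?_ ?_) (le_of_eq h3)
      · intro a _; simp; omega
      · intro u hu v hv h
        have h' : ((u:Fin n):ℕ) % 3 = ((v:Fin n):ℕ) % 3 := h
        have h1 : (Stmt6Aux.G n).connectedComponentMk u = (Stmt6Aux.G n).connectedComponentMk v := by
          rw [Set.mem_setOf_eq] at hu hv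
          rw [hu, hv]
        have hf := Stmt6Aux.reach_fv hn (SimpleGraph.ConnectedComponent.eq.mp h1)
        have hmu := Stmt6Aux.mem_arith u
        have hmv := Stmt6Aux.mem_arith v
        refine Subtype.ext (Fin.ext ?_)
        simp only [Stmt6Aux.fv] at hf
        split_ifs at hf <;> omega
      · exact Set.toFinite _
end

section
/- Let n ≥ 5, c and d be integers with c ≤ ⌈n/2⌉ − 1 and d ≥ ⌈(n−1)/3⌉, and let p be a real with 1/⌈(n−1)/3⌉ ≤ p < 1/2. Suppose g > 0 and x ≥ 0 are reals with x ≤ g/(1−p) satisfying (p−g)/p + x(1−p)/p ≤ d·x + (c−d)·g/(1−p). Then g ≥ (1−p)/c. -/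
/-- Final inequality manipulation for `Forb(P_n)`: with `n ≥ 5`,
`c ≤ ⌈n/2⌉ - 1`, `d ≥ ⌈(n-1)/3⌉`, `1/⌈(n-1)/3⌉ ≤ p < 1/2`, `g > 0`,
`0 ≤ x ≤ g/(1-p)`, the inequality
`(p-g)/p + x(1-p)/p ≤ d·x + (c-d)·g/(1-p)` implies `g ≥ (1-p)/c`.
(Here `⌈n/2⌉ = (n+1)/2` and `⌈(n-1)/3⌉ = (n-1+2)/3` as naturals.) -/
theorem stmt13 (n : ℕ) (hn : 5 ≤ n) (c d : ℤ)
    (hc : c ≤ ((n + 1) / 2 : ℕ) - 1) (hd : ((n - 1 + 2) / 3 : ℕ) ≤ d)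
    (p g x : ℝ) (hp1 : 1 / (((n - 1 + 2) / 3 : ℕ) : ℝ) ≤ p) (hp2 : p < 1/2)
    (hg : 0 < g) (hx0 : 0 ≤ x) (hx : x ≤ g / (1 - p))
    (hineq : (p - g) / p + x * (1 - p) / p ≤ (d : ℝ) * x + ((c : ℝ) - (d : ℝ)) * g / (1 - p)) :
    g ≥ (1 - p) / (c : ℝ) := by
  have hm : (2:ℕ) ≤ (n - 1 + 2) / 3 := by omega
  have hmR : (2:ℝ) ≤ (((n - 1 + 2) / 3 : ℕ) : ℝ) := by exact_mod_cast hm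
  have hmpos : (0:ℝ) < (((n - 1 + 2) / 3 : ℕ) : ℝ) := by linarith
  have hp0 : 0 < p := lt_of_lt_of_le (by positivity) hp1
  have h1p : 0 < 1 - p := by linarith
  have hdR : (((n - 1 + 2) / 3 : ℕ) : ℝ) ≤ (d : ℝ) := by
    have : ((((n - 1 + 2) / 3 : ℕ) : ℤ) : ℝ) ≤ ((d : ℤ) : ℝ) := by exact_mod_cast hd
    push_cast at this ⊢
    exact this
  -- 1 ≤ d * p
  have hdp : 1 ≤ (d:ℝ) * p := by
    have h1 : 1 ≤ p * (((n - 1 + 2) / 3 : ℕ) : ℝ) := by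
      rw [div_le_iff₀ hmpos] at hp1; linarith
    nlinarith
  -- clear the denominator p
  have h2 : (p - g) + x * (1 - p) ≤ ((d:ℝ)*x + ((c:ℝ)-(d:ℝ))*(g/(1-p)))*p := by
    rw [← div_le_iff₀ hp0, add_div]
    have e : ((c:ℝ)-(d:ℝ))*(g/(1-p)) = ((c:ℝ)-(d:ℝ))*g/(1-p) := (mul_div_assoc _ _ _).symm
    rw [e]
    exact hineq
  have hyt : g/(1-p)*(1-p) = g := div_mul_cancel₀ _ h1p.ne'
  have htx : 0 ≤ g/(1-p) - x := by linarith
  have hcoef : 0 ≤ (d:ℝ)*p - (1-p) := by linarith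
  -- key: p ≤ c * (g/(1-p)) * p
  have h5 : p ≤ (c:ℝ) * (g/(1-p)) * p := by nlinarith [mul_nonneg hcoef htx]
  have hct : 1 ≤ (c:ℝ) * (g/(1-p)) := le_of_mul_le_mul_right (by linarith) hp0
  have hc0 : 0 < (c:ℝ) := by
    by_contra h
    push_neg at h
    have : (c:ℝ) * (g/(1-p)) ≤ 0 :=
      mul_nonpos_of_nonpos_of_nonneg h (by positivity)
    linarith
  rw [ge_iff_le, div_le_iff₀ hc0]
  nlinarith [hct, hyt, h1p]
end

section
/- For all real p with 0 ≤ p ≤ 1 and every integer k ≥ 2, the function p ↦ p(1−p)/(1+(k−2)p) is concave on [0,1], and for every integer m ≥ 1 the function p ↦ min{p/2, p(1−p)/(1+(k−2)p), (1−p)/m} is continuous and concave on [0,1]. -/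
lemma denom_pos {c p : ℝ} (hc : 0 ≤ c) (hp : 0 ≤ p) : 0 < 1 + c * p := by
  nlinarith

lemma concave_main {c : ℝ} (hc : 0 ≤ c) :
    ConcaveOn ℝ (Set.Icc (0:ℝ) 1)
      (fun p : ℝ => p * (1 - p) / (1 + c * p)) := by
  refine ⟨convex_Icc 0 1, ?_⟩
  rintro x ⟨hx0, hx1⟩ y ⟨hy0, hy1⟩ a b ha hb hab
  simp only [smul_eq_mul]
  have hx : 0 < 1 + c * x := denom_pos hc hx0
  have hy : 0 < 1 + c * y := denom_pos hc hy0
  have hz0 : 0 ≤ a * x + b * y := by positivity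
  have hz : 0 < 1 + c * (a * x + b * y) := denom_pos hc hz0
  rw [← mul_div_assoc, ← mul_div_assoc, div_add_div _ _ (ne_of_gt hx) (ne_of_gt hy),
    div_le_div_iff₀ (by positivity) hz]
  have hb' : b = 1 - a := by linarith
  subst hb'
  nlinarith [mul_nonneg (mul_nonneg (mul_nonneg (by linarith : (0:ℝ) ≤ c + 1) ha) hb)
    (sq_nonneg (x - y)), sq_nonneg (x - y)]

lemma concave_affine (u v : ℝ) :
    ConcaveOn ℝ (Set.Icc (0:ℝ) 1) (fun p : ℝ => u + v * p) := by
  refine ⟨convex_Icc 0 1, ?_⟩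
  rintro x _ y _ a b ha hb hab
  simp only [smul_eq_mul]
  have hb' : b = 1 - a := by linarith
  subst hb'
  exact le_of_eq (by ring)

/-- For an integer `k ≥ 2` the function `p ↦ p(1-p)/(1+(k-2)p)` is concave on
`[0,1]`, and for any integer `m ≥ 1` the pointwise minimum
`p ↦ min{p/2, p(1-p)/(1+(k-2)p), (1-p)/m}` is continuous and concave on `[0,1]`. -/
theorem stmt16 (k m : ℕ) (hk : 2 ≤ k) (hm : 1 ≤ m) :
    ConcaveOn ℝ (Set.Icc (0:ℝ) 1)
      (fun p : ℝ => p * (1 - p) / (1 + ((k : ℝ) - 2) * p)) ∧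
    ContinuousOn
      (fun p : ℝ => min (min (p / 2) (p * (1 - p) / (1 + ((k : ℝ) - 2) * p)))
        ((1 - p) / (m : ℝ))) (Set.Icc (0:ℝ) 1) ∧
    ConcaveOn ℝ (Set.Icc (0:ℝ) 1)
      (fun p : ℝ => min (min (p / 2) (p * (1 - p) / (1 + ((k : ℝ) - 2) * p)))
        ((1 - p) / (m : ℝ))) := by
  have hc : (0:ℝ) ≤ (k : ℝ) - 2 := by
    have : (2:ℝ) ≤ (k:ℝ) := by exact_mod_cast hk
    linarith
  have hmain := concave_main hc
  have hden : ∀ p ∈ Set.Icc (0:ℝ) 1, 1 + ((k:ℝ) - 2) * p ≠ 0 := fun p hp =>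
    ne_of_gt (denom_pos hc hp.1)
  refine ⟨hmain, ?_, ?_⟩
  · have hf1 : ContinuousOn (fun p : ℝ => p / 2) (Set.Icc (0:ℝ) 1) :=
      (continuous_id.div_const 2).continuousOn
    have hf2 : ContinuousOn (fun p : ℝ => p * (1 - p) / (1 + ((k:ℝ) - 2) * p))
        (Set.Icc (0:ℝ) 1) := ContinuousOn.div (by fun_prop) (by fun_prop) hden
    have hf3 : ContinuousOn (fun p : ℝ => (1 - p) / (m:ℝ)) (Set.Icc (0:ℝ) 1) :=
      ((continuous_const.sub continuous_id).div_const _).continuousOn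
    intro x hx
    exact Filter.Tendsto.min (Filter.Tendsto.min (hf1 x hx) (hf2 x hx)) (hf3 x hx)
  · have h1 : ConcaveOn ℝ (Set.Icc (0:ℝ) 1) (fun p : ℝ => p / 2) := by
      have := concave_affine 0 (1/2)
      convert this using 2 with p
      ring
    have h3 : ConcaveOn ℝ (Set.Icc (0:ℝ) 1) (fun p : ℝ => (1 - p) / (m:ℝ)) := by
      have := concave_affine (1/(m:ℝ)) (-(1/(m:ℝ)))
      convert this using 2 with p
      ring
    exact (h1.inf hmain).inf h3
end
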